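/- Let 𝒳 be an LFCM space with discrete partition {A_i}_{i∈I}, let κ be an infinite cardinal or κ = 1, let C⁰ and C¹ be coarse 𝒳-modules, and let t : C⁰ → C¹ be an invertible operator of controlled propagation. Then for every E^X_disc-bounded measurable subset B of X with rk(1^{C¹}_B) ≥ κ, there exists an element A of the discrete partition {A_i}_{i∈I} such that rk(1^{C⁰}_A) ≥ κ and 1^{C¹}_B t 1^{C⁰}_A ≠ 0. -/

import Mathlib

noncomputable section

open scoped ENNReal

/-! ## Relations -/

/-- Composition of relations: for `R ⊆ Z × Y` and `S ⊆ Y × X`,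
`RelComp R S = {(z,x) | ∃ y, (z,y) ∈ R ∧ (y,x) ∈ S}`. -/
def RelComp {X Y Z : Type} (R : Set (Z × Y)) (S : Set (Y × X)) : Set (Z × X) :=
  {p | ∃ y, (p.1, y) ∈ R ∧ (y, p.2) ∈ S}

/-- Transpose of a relation. -/
def RelTrans {X Y : Type} (R : Set (Y × X)) : Set (X × Y) := {p | (p.2, p.1) ∈ R}

/-! ## Coarse spaces -/

/-- A coarse structure on a set `X`. -/
structure CoarseSpace (X : Type) where
  entourages : Set (Set (X × X))
  diagonal_mem : {p : X × X | p.1 = p.2} ∈ entourages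
  mem_of_subset : ∀ {E F : Set (X × X)}, E ∈ entourages → F ⊆ E → F ∈ entourages
  union_mem : ∀ {E F : Set (X × X)}, E ∈ entourages → F ∈ entourages → E ∪ F ∈ entourages
  transpose_mem : ∀ {E : Set (X × X)}, E ∈ entourages → RelTrans E ∈ entourages
  comp_mem : ∀ {E F : Set (X × X)}, E ∈ entourages → F ∈ entourages → RelComp E F ∈ entourages

namespace CoarseSpace

variable {X Y : Type}

/-- A gauge: a symmetric entourage containing the diagonal. -/
def IsGauge (C : CoarseSpace X) (E : Set (X × X)) : Prop :=
  E ∈ C.entourages ∧ RelTrans E = E ∧ {p : X × X | p.1 = p.2} ⊆ E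

/-- The `E`-neighbourhood `E[A]` of a set `A`. -/
def nbhd (E : Set (X × X)) (A : Set X) : Set X := {x | ∃ a ∈ A, (x, a) ∈ E}

/-- A set is bounded if `A × A` is contained in some entourage. -/
def IsBounded (C : CoarseSpace X) (A : Set X) : Prop := ∃ E ∈ C.entourages, A ×ˢ A ⊆ E

/-- `A ≺ B` : `A` is subordinate to `B`. -/
def Subordinate (C : CoarseSpace X) (A B : Set X) : Prop := ∃ E ∈ C.entourages, A ⊆ nbhd E B

/-- `A ≍ B` : asymptotic equivalence of subsets. -/
def Asymptotic (C : CoarseSpace X) (A B : Set X) : Prop :=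
  C.Subordinate A B ∧ C.Subordinate B A

/-- A coarse map between coarse spaces. -/
def IsCoarseMap (CX : CoarseSpace X) (CY : CoarseSpace Y) (f : X → Y) : Prop :=
  ∀ E ∈ CX.entourages, (fun p : X × X => (f p.1, f p.2)) '' E ∈ CY.entourages

/-- Two maps are close. -/
def Close (CX : CoarseSpace X) (CY : CoarseSpace Y) (f g : X → Y) : Prop :=
  ∀ E ∈ CX.entourages, (fun p : X × X => (f p.1, g p.2)) '' E ∈ CY.entourages

/-- A coarse equivalence (of maps). -/
def IsCoarseEquivMap (CX : CoarseSpace X) (CY : CoarseSpace Y) (f : X → Y) : Prop :=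
  IsCoarseMap CX CY f ∧ ∃ g : Y → X, IsCoarseMap CY CX g ∧
    Close CY CY (f ∘ g) id ∧ Close CX CX (g ∘ f) id

/-- A coarse embedding: a coarse map which is in addition expansive (equivalently, a coarse
equivalence onto its image with the subspace coarse structure). -/
def IsCoarseEmbedding (CX : CoarseSpace X) (CY : CoarseSpace Y) (f : X → Y) : Prop :=
  IsCoarseMap CX CY f ∧
    ∀ F ∈ CY.entourages, {p : X × X | (f p.1, f p.2) ∈ F} ∈ CX.entourages

/-- A coarse structure is countably generated if it is the smallest coarse structure
containing some countable family of subsets of `X × X`. -/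
def IsCountablyGenerated (C : CoarseSpace X) : Prop :=
  ∃ G : Set (Set (X × X)), G.Countable ∧ G ⊆ C.entourages ∧
    ∀ C' : CoarseSpace X, G ⊆ C'.entourages → C.entourages ⊆ C'.entourages

end CoarseSpace

/-- Subordination of relations `R₁, R₂ ⊆ Y × X` with respect to the product coarse structure. -/
def RelSub {X Y : Type} (CX : CoarseSpace X) (CY : CoarseSpace Y)
    (R₁ R₂ : Set (Y × X)) : Prop :=
  ∃ F ∈ CY.entourages, ∃ E ∈ CX.entourages,
    ∀ p ∈ R₁, ∃ q ∈ R₂, (p.1, q.1) ∈ F ∧ (p.2, q.2) ∈ E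

/-- Asymptotic equivalence of relations `R₁, R₂ ⊆ Y × X`. -/
def RelAsymp {X Y : Type} (CX : CoarseSpace X) (CY : CoarseSpace Y)
    (R₁ R₂ : Set (Y × X)) : Prop :=
  RelSub CX CY R₁ R₂ ∧ RelSub CX CY R₂ R₁

/-! ## LFCM spaces -/

/-- A discrete partition of a coarse space endowed with a Boolean algebra `meas` of subsets:
a measurable, locally finite, controlled partition `P` such that a set is measurable iff its
intersection with every block is measurable. -/
structure IsDiscretePartition {X : Type} (C : CoarseSpace X) (meas : Set (Set X))
    (P : Set (Set X)) : Prop where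
  nonempty : ∀ A ∈ P, A.Nonempty
  pairwiseDisjoint : ∀ A ∈ P, ∀ B ∈ P, A ≠ B → Disjoint A B
  covers : ⋃₀ P = Set.univ
  measurable : P ⊆ meas
  locallyFinite : ∀ B : Set X, C.IsBounded B → {A | A ∈ P ∧ (A ∩ B).Nonempty}.Finite
  controlled : ∃ E, C.IsGauge E ∧ ∀ A ∈ P, A ×ˢ A ⊆ E
  meas_iff : ∀ B : Set X, B ∈ meas ↔ ∀ A ∈ P, B ∩ A ∈ meas

/-- A locally finite coarse measurable (LFCM) space: a coarse space together with a Boolean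
algebra of subsets admitting a discrete partition (a chosen one is part of the data). -/
structure LFCMSpace (X : Type) where
  coarse : CoarseSpace X
  meas : Set (Set X)
  empty_mem : ∅ ∈ meas
  compl_mem : ∀ {A : Set X}, A ∈ meas → Aᶜ ∈ meas
  union_mem : ∀ {A B : Set X}, A ∈ meas → B ∈ meas → A ∪ B ∈ meas
  partition : Set (Set X)
  isPartition : IsDiscretePartition coarse meas partition

namespace LFCMSpace

variable {X Y : Type}

/-- The discreteness gauge `E_disc = ⊔_{A ∈ P} A × A` of an LFCM space. -/
def disc (𝒳 : LFCMSpace X) : Set (X × X) := ⋃ A ∈ 𝒳.partition, A ×ˢ A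

/-- A discreteness gauge: a gauge bounding the blocks of some discrete partition. -/
def IsDiscretenessGauge (𝒳 : LFCMSpace X) (E : Set (X × X)) : Prop :=
  𝒳.coarse.IsGauge E ∧
    ∃ P, IsDiscretePartition 𝒳.coarse 𝒳.meas P ∧ ∀ A ∈ P, A ×ˢ A ⊆ E

end LFCMSpace

/-- A coarse measurable map between LFCM spaces. -/
def IsCoarseMeasurableMap {X Y : Type} (𝒳 : LFCMSpace X) (𝒴 : LFCMSpace Y) (f : X → Y) : Prop :=
  CoarseSpace.IsCoarseMap 𝒳.coarse 𝒴.coarse f ∧ ∀ B ∈ 𝒴.meas, f ⁻¹' B ∈ 𝒳.meas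

/-! ## Coarse geometric modules -/

/-- A coarse geometric module over an LFCM space `𝒳`: a representation of the Boolean algebra
of measurable sets by orthogonal projections on a complex Hilbert space, nondegenerate on
bounded sets. -/
structure CoarseModule {X : Type} (𝒳 : LFCMSpace X) (H : Type) [NormedAddCommGroup H]
    [InnerProductSpace ℂ H] [CompleteSpace H] where
  proj : Set X → (H →L[ℂ] H)
  proj_empty : proj ∅ = 0
  proj_selfAdjoint : ∀ A ∈ 𝒳.meas, IsSelfAdjoint (proj A)
  proj_inter : ∀ {A B : Set X}, A ∈ 𝒳.meas → B ∈ 𝒳.meas → proj (A ∩ B) = proj A ∘L proj B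
  proj_union : ∀ {A B : Set X}, A ∈ 𝒳.meas → B ∈ 𝒳.meas → Disjoint A B →
      proj (A ∪ B) = proj A + proj B
  nondeg : Dense (↑(Submodule.span ℂ
      (⋃ A ∈ {A | A ∈ 𝒳.meas ∧ 𝒳.coarse.IsBounded A}, Set.range (proj A))) : Set H)

variable {X Y Z : Type}
variable {H₀ H₁ H₂ H₃ : Type}

/-- The support of a bounded operator between Hilbert spaces carrying representations
`pX`, `pY` of the measurable sets of LFCM spaces `𝒳` (source) and `𝒴` (target). -/
def opSupp [NormedAddCommGroup H₁] [InnerProductSpace ℂ H₁]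
    [NormedAddCommGroup H₂] [InnerProductSpace ℂ H₂]
    (𝒳 : LFCMSpace X) (𝒴 : LFCMSpace Y)
    (pX : Set X → (H₁ →L[ℂ] H₁)) (pY : Set Y → (H₂ →L[ℂ] H₂))
    (t : H₁ →L[ℂ] H₂) : Set (Y × X) :=
  ⋃₀ {S | ∃ B A, S = B ×ˢ A ∧ B ∈ 𝒴.meas ∧ B ×ˢ B ⊆ 𝒴.disc ∧
      A ∈ 𝒳.meas ∧ A ×ˢ A ⊆ 𝒳.disc ∧ pY B ∘L t ∘L pX A ≠ 0}

/-- Controlled propagation of an operator between modules over the same LFCM space. -/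
def HasControlledPropagation [NormedAddCommGroup H₁] [InnerProductSpace ℂ H₁]
    [NormedAddCommGroup H₂] [InnerProductSpace ℂ H₂]
    (𝒳 : LFCMSpace X) (pX : Set X → (H₁ →L[ℂ] H₁)) (pY : Set X → (H₂ →L[ℂ] H₂))
    (t : H₁ →L[ℂ] H₂) : Prop :=
  opSupp 𝒳 𝒳 pX pY t ∈ 𝒳.coarse.entourages

/-- Approximable operators: norm-limits of controlled propagation operators. -/
def Approximable [NormedAddCommGroup H₁] [InnerProductSpace ℂ H₁]
    [NormedAddCommGroup H₂] [InnerProductSpace ℂ H₂]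
    (𝒳 : LFCMSpace X) (pX : Set X → (H₁ →L[ℂ] H₁)) (pY : Set X → (H₂ →L[ℂ] H₂))
    (t : H₁ →L[ℂ] H₂) : Prop :=
  ∀ ε : ℝ, 0 < ε → ∃ s : H₁ →L[ℂ] H₂, HasControlledPropagation 𝒳 pX pY s ∧ ‖t - s‖ ≤ ε

/-- The rank (Hilbert dimension of the range) of an operator. -/
def projRank {H : Type} [NormedAddCommGroup H] [InnerProductSpace ℂ H]
    (p : H →L[ℂ] H) : Cardinal :=
  LinearMap.rank (p : H →ₗ[ℂ] H)

/-- The `κ`-domain of a coarse module, computed with respect to an arbitrary gauge `E`. -/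
def domKappaAt {X : Type} {H : Type} [NormedAddCommGroup H] [InnerProductSpace ℂ H]
    [CompleteSpace H] (𝒳 : LFCMSpace X) (M : CoarseModule 𝒳 H) (E : Set (X × X))
    (κ : Cardinal) : Set X :=
  ⋃₀ {A | A ∈ 𝒳.meas ∧ A ×ˢ A ⊆ E ∧ κ ≤ projRank (M.proj A)}

/-- The `κ`-domain of a coarse module (with respect to the discreteness gauge). -/
def domKappa {X : Type} {H : Type} [NormedAddCommGroup H] [InnerProductSpace ℂ H]
    [CompleteSpace H] (𝒳 : LFCMSpace X) (M : CoarseModule 𝒳 H) (κ : Cardinal) : Set X :=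
  domKappaAt 𝒳 M 𝒳.disc κ

/-- A coarse module is faithful if its faithfulness domain is asymptotic to the whole space. -/
def IsFaithfulMod {X : Type} {H : Type} [NormedAddCommGroup H] [InnerProductSpace ℂ H]
    [CompleteSpace H] (𝒳 : LFCMSpace X) (M : CoarseModule 𝒳 H) : Prop :=
  𝒳.coarse.Asymptotic (domKappa 𝒳 M 1) Set.univ

/-- A coarse module is ample if its ampleness domain is asymptotic to the whole space. -/
def IsAmpleMod {X : Type} {H : Type} [NormedAddCommGroup H] [InnerProductSpace ℂ H]
    [CompleteSpace H] (𝒳 : LFCMSpace X) (M : CoarseModule 𝒳 H) : Prop :=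
  𝒳.coarse.Asymptotic (domKappa 𝒳 M Cardinal.aleph0) Set.univ

/-- The approximate relation `f^T_{δ,F,E}` of a bounded operator. -/
def approxRel [NormedAddCommGroup H₁] [InnerProductSpace ℂ H₁]
    [NormedAddCommGroup H₂] [InnerProductSpace ℂ H₂]
    (𝒳 : LFCMSpace X) (𝒴 : LFCMSpace Y)
    (pX : Set X → (H₁ →L[ℂ] H₁)) (pY : Set Y → (H₂ →L[ℂ] H₂))
    (T : H₁ →L[ℂ] H₂) (δ : ℝ) (F : Set (Y × Y)) (E : Set (X × X)) : Set (Y × X) :=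
  ⋃₀ {S | ∃ B A, S = B ×ˢ A ∧ B ∈ 𝒴.meas ∧ B ×ˢ B ⊆ F ∧
      A ∈ 𝒳.meas ∧ A ×ˢ A ⊆ E ∧ δ < ‖pY B ∘L T ∘L pX A‖}

/-- A unitary operator between Hilbert spaces. -/
def IsUnitaryOp [NormedAddCommGroup H₁] [InnerProductSpace ℂ H₁] [CompleteSpace H₁]
    [NormedAddCommGroup H₂] [InnerProductSpace ℂ H₂] [CompleteSpace H₂]
    (U : H₁ →L[ℂ] H₂) : Prop :=
  ContinuousLinearMap.adjoint U ∘L U = ContinuousLinearMap.id ℂ H₁ ∧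
    U ∘L ContinuousLinearMap.adjoint U = ContinuousLinearMap.id ℂ H₂

/-- A central unitary of the C*-algebra of approximable operators on a coarse module. -/
def IsCentralUnitary {X : Type} {H : Type} [NormedAddCommGroup H] [InnerProductSpace ℂ H]
    [CompleteSpace H] (𝒳 : LFCMSpace X) (M : CoarseModule 𝒳 H) (u : H →L[ℂ] H) : Prop :=
  Approximable 𝒳 M.proj M.proj u ∧ IsUnitaryOp u ∧
    ∀ t : H →L[ℂ] H, Approximable 𝒳 M.proj M.proj t → u ∘L t = t ∘L u

/-- Equivalence of operators modulo central unitaries. -/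
def CongruentModCentral {X : Type} [NormedAddCommGroup H₁] [InnerProductSpace ℂ H₁]
    [CompleteSpace H₁] [NormedAddCommGroup H₂] [InnerProductSpace ℂ H₂] [CompleteSpace H₂]
    (𝒳 : LFCMSpace X) (C : CoarseModule 𝒳 H₁) (D : CoarseModule 𝒳 H₂)
    (t s : H₁ →L[ℂ] H₂) : Prop :=
  ∃ u v, IsCentralUnitary 𝒳 C u ∧ IsCentralUnitary 𝒳 D v ∧ t = v ∘L s ∘L u

/-! ## Direct sums of modules -/

/-- The direct sum `T ⊕ S` of two operators, on the `ℓ²`-product of Hilbert spaces. -/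
def prodOp [NormedAddCommGroup H₀] [InnerProductSpace ℂ H₀]
    [NormedAddCommGroup H₁] [InnerProductSpace ℂ H₁]
    [NormedAddCommGroup H₂] [InnerProductSpace ℂ H₂]
    [NormedAddCommGroup H₃] [InnerProductSpace ℂ H₃]
    (T : H₀ →L[ℂ] H₂) (S : H₁ →L[ℂ] H₃) :
    WithLp 2 (H₀ × H₁) →L[ℂ] WithLp 2 (H₂ × H₃) :=
  (WithLp.prodContinuousLinearEquiv 2 ℂ H₂ H₃).symm.toContinuousLinearMap ∘L
    (T.prodMap S) ∘L (WithLp.prodContinuousLinearEquiv 2 ℂ H₀ H₁).toContinuousLinearMap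

/-- The canonical inclusion `H₀ → H₀ ⊕ H₁`. -/
def inlOp (H₀ H₁ : Type) [NormedAddCommGroup H₀] [InnerProductSpace ℂ H₀]
    [NormedAddCommGroup H₁] [InnerProductSpace ℂ H₁] :
    H₀ →L[ℂ] WithLp 2 (H₀ × H₁) :=
  (WithLp.prodContinuousLinearEquiv 2 ℂ H₀ H₁).symm.toContinuousLinearMap ∘L
    ContinuousLinearMap.inl ℂ H₀ H₁

/-- The canonical inclusion `H₁ → H₀ ⊕ H₁`. -/
def inrOp (H₀ H₁ : Type) [NormedAddCommGroup H₀] [InnerProductSpace ℂ H₀]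
    [NormedAddCommGroup H₁] [InnerProductSpace ℂ H₁] :
    H₁ →L[ℂ] WithLp 2 (H₀ × H₁) :=
  (WithLp.prodContinuousLinearEquiv 2 ℂ H₀ H₁).symm.toContinuousLinearMap ∘L
    ContinuousLinearMap.inr ℂ H₀ H₁

/-- The canonical projection `H₀ ⊕ H₁ → H₀`. -/
def fstOp (H₀ H₁ : Type) [NormedAddCommGroup H₀] [InnerProductSpace ℂ H₀]
    [NormedAddCommGroup H₁] [InnerProductSpace ℂ H₁] :
    WithLp 2 (H₀ × H₁) →L[ℂ] H₀ :=
  ContinuousLinearMap.fst ℂ H₀ H₁ ∘L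
    (WithLp.prodContinuousLinearEquiv 2 ℂ H₀ H₁).toContinuousLinearMap

/-- The canonical projection `H₀ ⊕ H₁ → H₁`. -/
def sndOp (H₀ H₁ : Type) [NormedAddCommGroup H₀] [InnerProductSpace ℂ H₀]
    [NormedAddCommGroup H₁] [InnerProductSpace ℂ H₁] :
    WithLp 2 (H₀ × H₁) →L[ℂ] H₁ :=
  ContinuousLinearMap.snd ℂ H₀ H₁ ∘L
    (WithLp.prodContinuousLinearEquiv 2 ℂ H₀ H₁).toContinuousLinearMap

/-- `M` is the direct sum of the coarse modules `C₀` and `C₁`. -/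
def IsDirectSum {X : Type} [NormedAddCommGroup H₀] [InnerProductSpace ℂ H₀] [CompleteSpace H₀]
    [NormedAddCommGroup H₁] [InnerProductSpace ℂ H₁] [CompleteSpace H₁]
    (𝒳 : LFCMSpace X) (C₀ : CoarseModule 𝒳 H₀) (C₁ : CoarseModule 𝒳 H₁)
    (M : CoarseModule 𝒳 (WithLp 2 (H₀ × H₁))) : Prop :=
  ∀ A : Set X, M.proj A = prodOp (C₀.proj A) (C₁.proj A)

/-! ## Bundled modules and *-functors -/

/-- A coarse module over `𝒳` bundled together with its Hilbert space; the objects of the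
approximable category `𝒜(𝒳)`. -/
structure BundledModule {X : Type} (𝒳 : LFCMSpace X) where
  H : Type
  [instNorm : NormedAddCommGroup H]
  [instInner : InnerProductSpace ℂ H]
  [instComplete : CompleteSpace H]
  mod : CoarseModule 𝒳 H

attribute [instance] BundledModule.instNorm BundledModule.instInner BundledModule.instComplete

/-- A *-functor `𝒜(𝒳) → 𝒜(𝒴)` between approximable categories: a map on objects together
with a ℂ-linear, multiplicative, adjoint-preserving map on approximable operators. -/
structure StarFunctor {X Y : Type} (𝒳 : LFCMSpace X) (𝒴 : LFCMSpace Y) where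
  obj : BundledModule 𝒳 → BundledModule 𝒴
  map : ∀ {C D : BundledModule 𝒳} (t : C.H →L[ℂ] D.H),
      Approximable 𝒳 C.mod.proj D.mod.proj t → ((obj C).H →L[ℂ] (obj D).H)
  map_approximable : ∀ {C D : BundledModule 𝒳} (t : C.H →L[ℂ] D.H)
      (ht : Approximable 𝒳 C.mod.proj D.mod.proj t),
      Approximable 𝒴 (obj C).mod.proj (obj D).mod.proj (map t ht)
  map_id : ∀ (C : BundledModule 𝒳)
      (h : Approximable 𝒳 C.mod.proj C.mod.proj (ContinuousLinearMap.id ℂ C.H)),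
      map (ContinuousLinearMap.id ℂ C.H) h = ContinuousLinearMap.id ℂ (obj C).H
  map_comp : ∀ {C D G : BundledModule 𝒳} (t : C.H →L[ℂ] D.H) (s : D.H →L[ℂ] G.H)
      (ht : Approximable 𝒳 C.mod.proj D.mod.proj t)
      (hs : Approximable 𝒳 D.mod.proj G.mod.proj s)
      (hst : Approximable 𝒳 C.mod.proj G.mod.proj (s ∘L t)),
      map (s ∘L t) hst = map s hs ∘L map t ht
  map_add : ∀ {C D : BundledModule 𝒳} (t s : C.H →L[ℂ] D.H)
      (ht : Approximable 𝒳 C.mod.proj D.mod.proj t)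
      (hs : Approximable 𝒳 C.mod.proj D.mod.proj s)
      (hts : Approximable 𝒳 C.mod.proj D.mod.proj (t + s)),
      map (t + s) hts = map t ht + map s hs
  map_smul : ∀ {C D : BundledModule 𝒳} (c : ℂ) (t : C.H →L[ℂ] D.H)
      (ht : Approximable 𝒳 C.mod.proj D.mod.proj t)
      (hct : Approximable 𝒳 C.mod.proj D.mod.proj (c • t)),
      map (c • t) hct = c • map t ht
  map_star : ∀ {C D : BundledModule 𝒳} (t : C.H →L[ℂ] D.H)
      (ht : Approximable 𝒳 C.mod.proj D.mod.proj t)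
      (hstar : Approximable 𝒳 D.mod.proj C.mod.proj (ContinuousLinearMap.adjoint t)),
      map (ContinuousLinearMap.adjoint t) hstar = ContinuousLinearMap.adjoint (map t ht)

namespace StarFunctor

variable {𝒳 : LFCMSpace X} {𝒴 : LFCMSpace Y}

/-- A full functor. -/
def Full (F : StarFunctor 𝒳 𝒴) : Prop :=
  ∀ (C D : BundledModule 𝒳) (s : (F.obj C).H →L[ℂ] (F.obj D).H),
    Approximable 𝒴 (F.obj C).mod.proj (F.obj D).mod.proj s →
    ∃ (t : C.H →L[ℂ] D.H) (ht : Approximable 𝒳 C.mod.proj D.mod.proj t), F.map t ht = s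

/-- A faithful functor. -/
def Faithful (F : StarFunctor 𝒳 𝒴) : Prop :=
  ∀ (C D : BundledModule 𝒳) (t t' : C.H →L[ℂ] D.H)
    (ht : Approximable 𝒳 C.mod.proj D.mod.proj t)
    (ht' : Approximable 𝒳 C.mod.proj D.mod.proj t'),
    F.map t ht = F.map t' ht' → t = t'

/-- An essentially surjective functor (up to isomorphism in the approximable category). -/
def EssSurj (F : StarFunctor 𝒳 𝒴) : Prop :=
  ∀ D' : BundledModule 𝒴, ∃ C : BundledModule 𝒳,
    ∃ u : (F.obj C).H →L[ℂ] D'.H, Approximable 𝒴 (F.obj C).mod.proj D'.mod.proj u ∧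
    ∃ v : D'.H →L[ℂ] (F.obj C).H, Approximable 𝒴 D'.mod.proj (F.obj C).mod.proj v ∧
      v ∘L u = ContinuousLinearMap.id ℂ (F.obj C).H ∧
      u ∘L v = ContinuousLinearMap.id ℂ D'.H

/-- A unitary `U` implements the *-isomorphism induced by `F` on the endomorphism algebra of
a module `C`. -/
def Implements (F : StarFunctor 𝒳 𝒴) (C : BundledModule 𝒳)
    (U : C.H →L[ℂ] (F.obj C).H) : Prop :=
  IsUnitaryOp U ∧ ∀ (t : C.H →L[ℂ] C.H) (ht : Approximable 𝒳 C.mod.proj C.mod.proj t),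
    F.map t ht = U ∘L t ∘L ContinuousLinearMap.adjoint U

end StarFunctor

/-- The graph of a map, as a relation `⊆ Y × X`. -/
def mapGraph {X Y : Type} (f : X → Y) : Set (Y × X) := {p | p.1 = f p.2}

/-- A relation `R ⊆ Y × X` is a coarse equivalence from `DX ⊆ X` to `DY ⊆ Y` (each with the
subspace coarse structure): controlled in both directions, densely defined and coarsely
surjective relative to `DX` and `DY`. -/
def IsRelCoarseEquivOn {X Y : Type} (CX : CoarseSpace X) (CY : CoarseSpace Y)
    (DX : Set X) (DY : Set Y) (R : Set (Y × X)) : Prop :=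
  (∀ E ∈ CX.entourages, RelComp R (RelComp E (RelTrans R)) ∈ CY.entourages) ∧
  (∀ F ∈ CY.entourages, RelComp (RelTrans R) (RelComp F R) ∈ CX.entourages) ∧
  CX.Asymptotic (Prod.snd '' R) DX ∧ CY.Asymptotic (Prod.fst '' R) DY

/-- `S ⊆ X × Y` is a coarse inverse of the relation `R ⊆ Y × X` between `DX` and `DY`:
both compositions are asymptotic to the respective (restricted) diagonals. -/
def IsRelCoarseInverseOn {X Y : Type} (CX : CoarseSpace X) (CY : CoarseSpace Y)
    (DX : Set X) (DY : Set Y) (R : Set (Y × X)) (S : Set (X × Y)) : Prop :=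
  RelAsymp CX CX (RelComp S R) {p : X × X | p.1 = p.2 ∧ p.1 ∈ DX} ∧
  RelAsymp CY CY (RelComp R S) {p : Y × Y | p.1 = p.2 ∧ p.1 ∈ DY}

/-- The statement that a coarse map `f` represents the coarse embedding induced by a full and
faithful *-functor `F` via approximate relations of implementing unitaries. -/
def RepresentsInducedEmbedding {X Y : Type} {𝒳 : LFCMSpace X} {𝒴 : LFCMSpace Y}
    (F : StarFunctor 𝒳 𝒴) (f : X → Y) : Prop :=
  ∀ (C : BundledModule 𝒳), IsFaithfulMod 𝒳 C.mod →
  ∀ (U : C.H →L[ℂ] (F.obj C).H), F.Implements C U →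
  ∀ δ : ℝ, 0 < δ → δ < 1 →
  ∃ F₀ ∈ 𝒴.coarse.entourages, ∃ E₀ ∈ 𝒳.coarse.entourages,
    ∀ F' ∈ 𝒴.coarse.entourages, F₀ ⊆ F' → ∀ E ∈ 𝒳.coarse.entourages, E₀ ⊆ E →
      RelAsymp 𝒳.coarse 𝒴.coarse
        (approxRel 𝒳 𝒴 C.mod.proj (F.obj C).mod.proj U δ F' E) (mapGraph f)

/-- Bundle a coarse module into an object of the approximable category. -/
abbrev BundledModule.ofModule {X : Type} {𝒳 : LFCMSpace X} {H : Type} [NormedAddCommGroup H]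
    [InnerProductSpace ℂ H] [CompleteSpace H] (M : CoarseModule 𝒳 H) : BundledModule 𝒳 :=
  ⟨H, M⟩

theorem LFCMSpace.disc_mem {X : Type} (𝒳 : LFCMSpace X) :
    𝒳.disc ∈ 𝒳.coarse.entourages := by
  obtain ⟨E, hE, hEP⟩ := 𝒳.isPartition.controlled
  refine 𝒳.coarse.mem_of_subset hE.1 ?_
  intro p hp
  simp only [LFCMSpace.disc, Set.mem_iUnion] at hp
  obtain ⟨A, hA, hpA⟩ := hp
  exact hEP A hA hpA

theorem prodOp_comp_inlOp {H₀ H₁ H₂ H₃ : Type}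
    [NormedAddCommGroup H₀] [InnerProductSpace ℂ H₀]
    [NormedAddCommGroup H₁] [InnerProductSpace ℂ H₁]
    [NormedAddCommGroup H₂] [InnerProductSpace ℂ H₂]
    [NormedAddCommGroup H₃] [InnerProductSpace ℂ H₃]
    (T : H₀ →L[ℂ] H₂) (S : H₁ →L[ℂ] H₃) :
    prodOp T S ∘L inlOp H₀ H₁ = inlOp H₂ H₃ ∘L T := by
  ext x
  simp [prodOp, inlOp]

theorem prodOp_comp_inrOp {H₀ H₁ H₂ H₃ : Type}
    [NormedAddCommGroup H₀] [InnerProductSpace ℂ H₀]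
    [NormedAddCommGroup H₁] [InnerProductSpace ℂ H₁]
    [NormedAddCommGroup H₂] [InnerProductSpace ℂ H₂]
    [NormedAddCommGroup H₃] [InnerProductSpace ℂ H₃]
    (T : H₀ →L[ℂ] H₂) (S : H₁ →L[ℂ] H₃) :
    prodOp T S ∘L inrOp H₀ H₁ = inrOp H₂ H₃ ∘L S := by
  ext x
  simp [prodOp, inrOp]

/-- The canonical inclusion into a direct sum of coarse modules is approximable
(indeed it has controlled propagation). -/
theorem IsDirectSum.approximable_inl {X : Type} {H₀ H₁ : Type}
    [NormedAddCommGroup H₀] [InnerProductSpace ℂ H₀] [CompleteSpace H₀]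
    [NormedAddCommGroup H₁] [InnerProductSpace ℂ H₁] [CompleteSpace H₁]
    {𝒳 : LFCMSpace X} {C₀ : CoarseModule 𝒳 H₀} {C₁ : CoarseModule 𝒳 H₁}
    {M : CoarseModule 𝒳 (WithLp 2 (H₀ × H₁))} (hM : IsDirectSum 𝒳 C₀ C₁ M) :
    Approximable 𝒳 C₀.proj M.proj (inlOp H₀ H₁) := by
  intro ε hε
  refine ⟨inlOp H₀ H₁, ?_, by simp [hε.le]⟩
  refine 𝒳.coarse.mem_of_subset (𝒳.coarse.comp_mem 𝒳.disc_mem 𝒳.disc_mem) ?_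
  rintro ⟨y, x⟩ hyx
  obtain ⟨s, ⟨B, A, rfl, hBmeas, hBb, hAmeas, hAb, hne⟩, hmem⟩ := hyx
  have key : M.proj B ∘L inlOp H₀ H₁ ∘L C₀.proj A
      = inlOp H₀ H₁ ∘L C₀.proj (B ∩ A) := by
    rw [C₀.proj_inter hBmeas hAmeas, hM B, ← ContinuousLinearMap.comp_assoc,
      prodOp_comp_inlOp, ContinuousLinearMap.comp_assoc]
  have hBA : (B ∩ A).Nonempty := by
    by_contra h
    rw [Set.not_nonempty_iff_eq_empty] at h
    apply hne
    rw [key, h, C₀.proj_empty]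
    ext z
    simp
  obtain ⟨z, hzB, hzA⟩ := hBA
  obtain ⟨hyB, hxA⟩ := hmem
  exact ⟨z, hBb ⟨hyB, hzB⟩, hAb ⟨hzA, hxA⟩⟩

theorem IsDirectSum.approximable_inr {X : Type} {H₀ H₁ : Type}
    [NormedAddCommGroup H₀] [InnerProductSpace ℂ H₀] [CompleteSpace H₀]
    [NormedAddCommGroup H₁] [InnerProductSpace ℂ H₁] [CompleteSpace H₁]
    {𝒳 : LFCMSpace X} {C₀ : CoarseModule 𝒳 H₀} {C₁ : CoarseModule 𝒳 H₁}
    {M : CoarseModule 𝒳 (WithLp 2 (H₀ × H₁))} (hM : IsDirectSum 𝒳 C₀ C₁ M) :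
    Approximable 𝒳 C₁.proj M.proj (inrOp H₀ H₁) := by
  intro ε hε
  refine ⟨inrOp H₀ H₁, ?_, by simp [hε.le]⟩
  refine 𝒳.coarse.mem_of_subset (𝒳.coarse.comp_mem 𝒳.disc_mem 𝒳.disc_mem) ?_
  rintro ⟨y, x⟩ hyx
  obtain ⟨s, ⟨B, A, rfl, hBmeas, hBb, hAmeas, hAb, hne⟩, hmem⟩ := hyx
  have key : M.proj B ∘L inrOp H₀ H₁ ∘L C₁.proj A
      = inrOp H₀ H₁ ∘L C₁.proj (B ∩ A) := by
    rw [C₁.proj_inter hBmeas hAmeas, hM B, ← ContinuousLinearMap.comp_assoc,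
      prodOp_comp_inrOp, ContinuousLinearMap.comp_assoc]
  have hBA : (B ∩ A).Nonempty := by
    by_contra h
    rw [Set.not_nonempty_iff_eq_empty] at h
    apply hne
    rw [key, h, C₁.proj_empty]
    ext z
    simp
  obtain ⟨z, hzB, hzA⟩ := hBA
  obtain ⟨hyB, hxA⟩ := hmem
  exact ⟨z, hBb ⟨hyB, hzB⟩, hAb ⟨hzA, hxA⟩⟩

namespace AuxTranslate

variable {X : Type}

lemma inter_mem (𝒳 : LFCMSpace X) {A B : Set X} (hA : A ∈ 𝒳.meas) (hB : B ∈ 𝒳.meas) :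
    A ∩ B ∈ 𝒳.meas := by
  have h := 𝒳.compl_mem (𝒳.union_mem (𝒳.compl_mem hA) (𝒳.compl_mem hB))
  simpa [Set.compl_union, compl_compl] using h

lemma diff_mem (𝒳 : LFCMSpace X) {A B : Set X} (hA : A ∈ 𝒳.meas) (hB : B ∈ 𝒳.meas) :
    A \ B ∈ 𝒳.meas := by
  rw [Set.diff_eq]; exact inter_mem 𝒳 hA (𝒳.compl_mem hB)

lemma proj_biUnion {H : Type} [NormedAddCommGroup H] [InnerProductSpace ℂ H] [CompleteSpace H]
    {𝒳 : LFCMSpace X} (M : CoarseModule 𝒳 H) {ι : Type} (𝔽 : Finset ι) (f : ι → Set X)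
    (hmeas : ∀ i ∈ 𝔽, f i ∈ 𝒳.meas)
    (hdisj : ∀ i ∈ 𝔽, ∀ j ∈ 𝔽, i ≠ j → Disjoint (f i) (f j)) :
    (⋃ i ∈ 𝔽, f i) ∈ 𝒳.meas ∧ M.proj (⋃ i ∈ 𝔽, f i) = ∑ i ∈ 𝔽, M.proj (f i) := by
  classical
  revert hmeas hdisj
  refine Finset.induction_on 𝔽 ?_ ?_
  · intro _ _
    simpa using ⟨𝒳.empty_mem, M.proj_empty⟩
  · intro i s hi ih hmeas hdisj
    have hfi : f i ∈ 𝒳.meas := hmeas i (Finset.mem_insert_self i s)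
    have hmeas' : ∀ j ∈ s, f j ∈ 𝒳.meas := fun j hj => hmeas j (Finset.mem_insert_of_mem hj)
    have hdisj' : ∀ j ∈ s, ∀ k ∈ s, j ≠ k → Disjoint (f j) (f k) := fun j hj k hk =>
      hdisj j (Finset.mem_insert_of_mem hj) k (Finset.mem_insert_of_mem hk)
    obtain ⟨hUmeas, hUproj⟩ := ih hmeas' hdisj'
    have hd : Disjoint (f i) (⋃ j ∈ s, f j) := by
      rw [Set.disjoint_iUnion₂_right]
      intro j hj
      exact hdisj i (Finset.mem_insert_self i s) j (Finset.mem_insert_of_mem hj)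
        (fun h => hi (h ▸ hj))
    have hset : (⋃ j ∈ (insert i s : Finset ι), f j) = f i ∪ ⋃ j ∈ s, f j := by
      simp [Finset.set_biUnion_insert]
    constructor
    · rw [hset]; exact 𝒳.union_mem hfi hUmeas
    · rw [hset, M.proj_union hfi hUmeas hd, hUproj, Finset.sum_insert hi]

lemma sum_lt_of_lt {κ : Cardinal} (hκ : κ = 1 ∨ Cardinal.aleph0 ≤ κ) {ι : Type}
    (𝔽 : Finset ι) (f : ι → Cardinal) (h : ∀ i ∈ 𝔽, f i < κ) : ∑ i ∈ 𝔽, f i < κ := by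
  classical
  have hpos : (0 : Cardinal) < κ := by
    rcases hκ with rfl | h'
    · exact zero_lt_one
    · exact lt_of_lt_of_le Cardinal.aleph0_pos h'
  revert h
  refine Finset.induction_on 𝔽 ?_ ?_
  · intro _; simpa using hpos
  · intro i s hi ih h
    rw [Finset.sum_insert hi]
    have h1 : f i < κ := h i (Finset.mem_insert_self i s)
    have h2 : ∑ j ∈ s, f j < κ := ih fun j hj => h j (Finset.mem_insert_of_mem hj)
    rcases hκ with rfl | h'
    · rw [Cardinal.lt_one_iff_zero] at h1 h2 ⊢
      rw [h1, h2, add_zero]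
    · exact Cardinal.add_lt_of_lt h' h1 h2

end AuxTranslate

/-- Translations of the κ-domain: an invertible controlled propagation
operator moves high-rank blocks to high-rank blocks of the discrete partition. -/
theorem translations_of_domain {X : Type} {H₀ H₁ : Type}
    [NormedAddCommGroup H₀] [InnerProductSpace ℂ H₀] [CompleteSpace H₀]
    [NormedAddCommGroup H₁] [InnerProductSpace ℂ H₁] [CompleteSpace H₁]
    (𝒳 : LFCMSpace X) (C0 : CoarseModule 𝒳 H₀) (C1 : CoarseModule 𝒳 H₁)
    (κ : Cardinal) (hκ : κ = 1 ∨ Cardinal.aleph0 ≤ κ)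
    (t : H₀ ≃L[ℂ] H₁)
    (ht : HasControlledPropagation 𝒳 C0.proj C1.proj (t : H₀ →L[ℂ] H₁))
    (B : Set X) (hBmeas : B ∈ 𝒳.meas) (hBbdd : B ×ˢ B ⊆ 𝒳.disc)
    (hBrank : κ ≤ projRank (C1.proj B)) :
    ∃ A ∈ 𝒳.partition, κ ≤ projRank (C0.proj A) ∧
      C1.proj B ∘L (t : H₀ →L[ℂ] H₁) ∘L C0.proj A ≠ 0 := by
  classical
  by_contra hcon
  push_neg at hcon
  -- κ is positive
  have hκ1 : (1 : Cardinal) ≤ κ := by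
    rcases hκ with rfl | h
    · exact le_refl 1
    · exact le_trans (le_of_lt Cardinal.one_lt_aleph0) h
  have hrank_pos : (0 : Cardinal) < projRank (C1.proj B) :=
    lt_of_lt_of_le (lt_of_lt_of_le zero_lt_one hκ1) hBrank
  -- B is nonempty
  have hBne : B.Nonempty := by
    rw [Set.nonempty_iff_ne_empty]
    rintro rfl
    rw [projRank, C1.proj_empty] at hrank_pos
    simp [LinearMap.rank_zero] at hrank_pos
  obtain ⟨b₀, hb₀⟩ := hBne
  set E := opSupp 𝒳 𝒳 C0.proj C1.proj (t : H₀ →L[ℂ] H₁) with hEdef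
  set N : Set X := {x | (b₀, x) ∈ E} with hNdef
  have hNb : 𝒳.coarse.IsBounded N := by
    refine ⟨RelComp (RelTrans E) E,
      𝒳.coarse.comp_mem (𝒳.coarse.transpose_mem ht) ht, ?_⟩
    rintro ⟨x, y⟩ ⟨hx, hy⟩
    exact ⟨b₀, hx, hy⟩
  set S : Set (Set X) := {A | A ∈ 𝒳.partition ∧
    C1.proj B ∘L (t : H₀ →L[ℂ] H₁) ∘L C0.proj A ≠ 0} with hSdef
  have hmemE : ∀ A ∈ S, ∀ a ∈ A, (b₀, a) ∈ E := by
    rintro A ⟨hAP, hAne0⟩ a ha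
    refine ⟨B ×ˢ A, ⟨B, A, rfl, hBmeas, hBbdd, 𝒳.isPartition.measurable hAP, ?_, hAne0⟩,
      ⟨hb₀, ha⟩⟩
    intro p hp
    exact Set.mem_biUnion hAP hp
  have hSfin : S.Finite := by
    refine (𝒳.isPartition.locallyFinite N hNb).subset ?_
    rintro A ⟨hAP, hAne0⟩
    obtain ⟨a, ha⟩ := 𝒳.isPartition.nonempty A hAP
    exact ⟨hAP, a, ha, hmemE A ⟨hAP, hAne0⟩ a ha⟩
  set 𝔽 : Finset (Set X) := hSfin.toFinset with h𝔽def
  have h𝔽mem : ∀ A, A ∈ 𝔽 ↔ A ∈ S := fun A => hSfin.mem_toFinset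
  set U : Set X := ⋃ A ∈ 𝔽, id A with hUdef
  obtain ⟨hUmeas, hUproj⟩ := AuxTranslate.proj_biUnion C0 𝔽 id
    (fun A hA => 𝒳.isPartition.measurable ((h𝔽mem A).1 hA).1)
    (fun A hA A' hA' hne =>
      𝒳.isPartition.pairwiseDisjoint A ((h𝔽mem A).1 hA).1 A' ((h𝔽mem A').1 hA').1 hne)
  -- the key vanishing statement on bounded pieces away from U
  have hkey : ∀ D, D ∈ 𝒳.meas → 𝒳.coarse.IsBounded D →
      C1.proj B ∘L (t : H₀ →L[ℂ] H₁) ∘L C0.proj (D \ U) = 0 := by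
    intro D hDmeas hDb
    have hDUmeas : D \ U ∈ 𝒳.meas := AuxTranslate.diff_mem 𝒳 hDmeas hUmeas
    have hTfin : {A | A ∈ 𝒳.partition ∧ (A ∩ D).Nonempty}.Finite :=
      𝒳.isPartition.locallyFinite D hDb
    set 𝕋 : Finset (Set X) := hTfin.toFinset with h𝕋def
    have h𝕋mem : ∀ A, A ∈ 𝕋 ↔ A ∈ 𝒳.partition ∧ (A ∩ D).Nonempty :=
      fun A => hTfin.mem_toFinset
    have hcover : D \ U = ⋃ A ∈ 𝕋, (D \ U) ∩ A := by
      ext x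
      constructor
      · intro hx
        have hx' : x ∈ ⋃₀ 𝒳.partition := by
          rw [𝒳.isPartition.covers]; trivial
        obtain ⟨A, hAP, hxA⟩ := hx'
        exact Set.mem_biUnion ((h𝕋mem A).2 ⟨hAP, ⟨x, hxA, hx.1⟩⟩) ⟨hx, hxA⟩
      · intro hx
        simp only [Set.mem_iUnion] at hx
        obtain ⟨A, _, hx', _⟩ := hx
        exact hx'
    obtain ⟨_, hproj⟩ := AuxTranslate.proj_biUnion C0 𝕋 (fun A => (D \ U) ∩ A)
      (fun A hA => AuxTranslate.inter_mem 𝒳 hDUmeas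
        (𝒳.isPartition.measurable ((h𝕋mem A).1 hA).1))
      (fun A hA A' hA' hne => Disjoint.mono inf_le_right inf_le_right
        (𝒳.isPartition.pairwiseDisjoint A ((h𝕋mem A).1 hA).1 A' ((h𝕋mem A').1 hA').1 hne))
    have hterm : ∀ A ∈ 𝕋,
        C1.proj B ∘L (t : H₀ →L[ℂ] H₁) ∘L C0.proj ((D \ U) ∩ A) = 0 := by
      intro A hA
      have hAP := ((h𝕋mem A).1 hA).1
      by_cases hAS : A ∈ S
      · have hempty : (D \ U) ∩ A = ∅ := by
          apply Set.eq_empty_of_forall_notMem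
          rintro x ⟨hxDU, hxA⟩
          exact hxDU.2 (Set.mem_biUnion ((h𝔽mem A).2 hAS) hxA)
        rw [hempty, C0.proj_empty]
        ext v; simp
      · have hzero : C1.proj B ∘L (t : H₀ →L[ℂ] H₁) ∘L C0.proj A = 0 := by
          by_contra h; exact hAS ⟨hAP, h⟩
        have hfactor : C0.proj ((D \ U) ∩ A) = C0.proj A ∘L C0.proj ((D \ U) ∩ A) := by
          rw [← C0.proj_inter (𝒳.isPartition.measurable hAP)
            (AuxTranslate.inter_mem 𝒳 hDUmeas (𝒳.isPartition.measurable hAP))]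
          congr 1
          ext x
          simp only [Set.mem_inter_iff, Set.mem_diff]
          tauto
        have h0 : ∀ w, (C1.proj B) ((t : H₀ →L[ℂ] H₁) ((C0.proj A) w)) = 0 := by
          intro w
          have := congrArg (fun f : H₀ →L[ℂ] H₁ => f w) hzero
          simpa using this
        ext v
        simp only [ContinuousLinearMap.comp_apply, ContinuousLinearMap.zero_apply]
        rw [hfactor]
        simp only [ContinuousLinearMap.comp_apply]
        exact h0 _
    ext v
    have hsum : C0.proj (D \ U) v = ∑ A ∈ 𝕋, C0.proj ((D \ U) ∩ A) v := by
      conv_lhs => rw [hcover]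
      rw [hproj]
      simp [ContinuousLinearMap.sum_apply]
    simp only [ContinuousLinearMap.comp_apply, ContinuousLinearMap.zero_apply]
    rw [hsum, map_sum, map_sum]
    refine Finset.sum_eq_zero fun A hA => ?_
    have h0 := hterm A hA
    have := congrArg (fun (f : H₀ →L[ℂ] H₁) => f v) h0
    simpa [ContinuousLinearMap.comp_apply] using this
  -- density argument: 1_B t (1 - 1_U) = 0
  set s : H₀ →L[ℂ] H₁ := C1.proj B ∘L (t : H₀ →L[ℂ] H₁) ∘L
    (ContinuousLinearMap.id ℂ H₀ - C0.proj U) with hsdef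
  have hs0 : s = 0 := by
    set G : Set H₀ := ⋃ A ∈ {A | A ∈ 𝒳.meas ∧ 𝒳.coarse.IsBounded A},
      Set.range (C0.proj A) with hGdef
    have hker : ∀ v ∈ G, s v = 0 := by
      intro v hv
      simp only [hGdef, Set.mem_iUnion] at hv
      obtain ⟨D, hD, w, rfl⟩ := hv
      have hDmeas := hD.1
      have hDb := hD.2
      have h1 : C0.proj U (C0.proj D w) = C0.proj (U ∩ D) w := by
        rw [C0.proj_inter hUmeas hDmeas]; rfl
      have hsetD : (U ∩ D) ∪ (D \ U) = D := by
        rw [Set.inter_comm]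
        exact Set.inter_union_diff D U
      have hdisjUD : Disjoint (U ∩ D) (D \ U) := by
        rw [Set.disjoint_iff]
        rintro x ⟨⟨hxU, _⟩, _, hxU'⟩
        exact absurd hxU hxU'
      have h2 : C0.proj D = C0.proj (U ∩ D) + C0.proj (D \ U) := by
        rw [← C0.proj_union (AuxTranslate.inter_mem 𝒳 hUmeas hDmeas)
          (AuxTranslate.diff_mem 𝒳 hDmeas hUmeas) hdisjUD, hsetD]
      have h3 : C0.proj D w - C0.proj U (C0.proj D w) = C0.proj (D \ U) w := by
        rw [h1]
        have := congrArg (fun (f : H₀ →L[ℂ] H₀) => f w) h2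
        simp only [ContinuousLinearMap.add_apply] at this
        rw [this]
        abel
      have h4 := congrArg (fun (f : H₀ →L[ℂ] H₁) => f w) (hkey D hDmeas hDb)
      simp only [ContinuousLinearMap.comp_apply, ContinuousLinearMap.zero_apply] at h4
      simp only [hsdef, ContinuousLinearMap.comp_apply, ContinuousLinearMap.sub_apply,
        ContinuousLinearMap.id_apply]
      rw [h3]
      simpa using h4
    have hclosed : IsClosed {v : H₀ | s v = 0} :=
      isClosed_eq s.continuous continuous_const
    have hspan : (Submodule.span ℂ G : Set H₀) ⊆ {v | s v = 0} := by
      have hle : Submodule.span ℂ G ≤ LinearMap.ker (s : H₀ →ₗ[ℂ] H₁) := by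
        exact Submodule.span_le.2 fun v hv => hker v hv
      intro v hv
      exact hle hv
    have huniv : {v : H₀ | s v = 0} = Set.univ := by
      apply Set.eq_univ_of_univ_subset
      calc Set.univ = closure (Submodule.span ℂ G : Set H₀) := (C0.nondeg.closure_eq).symm
        _ ⊆ closure {v | s v = 0} := closure_mono hspan
        _ = {v | s v = 0} := hclosed.closure_eq
    ext v
    have hv : v ∈ {v : H₀ | s v = 0} := huniv ▸ Set.mem_univ v
    simpa using hv
  -- 1_B t = 1_B t 1_U pointwise
  have hfact : ∀ v, C1.proj B (t v) = C1.proj B (t (C0.proj U v)) := by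
    intro v
    have := congrArg (fun (f : H₀ →L[ℂ] H₁) => f v) hs0
    simp only [hsdef, ContinuousLinearMap.comp_apply, ContinuousLinearMap.sub_apply,
      ContinuousLinearMap.id_apply, ContinuousLinearMap.zero_apply, map_sub,
      sub_eq_zero] at this
    exact this
  have hBeq : C1.proj B = (C1.proj B ∘L (t : H₀ →L[ℂ] H₁) ∘L C0.proj U) ∘L
      (t.symm : H₁ →L[ℂ] H₀) := by
    ext v
    simp only [ContinuousLinearMap.comp_apply, ContinuousLinearEquiv.coe_coe]
    rw [← hfact (t.symm v)]
    simp
  have hrank1 : projRank (C1.proj B) ≤ projRank (C0.proj U) := by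
    rw [projRank, projRank, hBeq]
    calc LinearMap.rank (((C1.proj B ∘L (t : H₀ →L[ℂ] H₁) ∘L C0.proj U) ∘L
          (t.symm : H₁ →L[ℂ] H₀) : H₁ →L[ℂ] H₁) : H₁ →ₗ[ℂ] H₁)
        ≤ LinearMap.rank ((C1.proj B ∘L (t : H₀ →L[ℂ] H₁) ∘L C0.proj U :
            H₀ →L[ℂ] H₁) : H₀ →ₗ[ℂ] H₁) := by
          rw [ContinuousLinearMap.toLinearMap_comp]
          exact LinearMap.rank_comp_le_left _ _
      _ ≤ LinearMap.rank ((C0.proj U : H₀ →L[ℂ] H₀) : H₀ →ₗ[ℂ] H₀) := by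
          rw [← ContinuousLinearMap.comp_assoc, ContinuousLinearMap.toLinearMap_comp]
          exact LinearMap.rank_comp_le_right _ _
  have hrank2 : projRank (C0.proj U) ≤ ∑ A ∈ 𝔽, projRank (C0.proj A) := by
    rw [projRank, hUproj]
    rw [ContinuousLinearMap.coe_sum]
    exact LinearMap.rank_finset_sum_le _ _
  have hlt : ∀ A ∈ 𝔽, projRank (C0.proj A) < κ := by
    intro A hA
    have hAS := (h𝔽mem A).1 hA
    by_contra h
    push_neg at h
    exact hAS.2 (hcon A hAS.1 h)
  exact absurd (hBrank.trans (hrank1.trans hrank2))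
    (not_le.2 (AuxTranslate.sum_lt_of_lt hκ 𝔽 _ hlt))
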